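/- Let n ≥ 1 be an integer, κ > 0 a real number, k₀ a natural number, and let a : ℕ → ℝ be a nonnegative function with Σ_{k=0}^{∞} a(k) < ∞ and a(K) ≥ κ·2^(2K−1)·2^(−nK) for all K ≥ k₀. For natural numbers k₁ ≤ k₂ define S(k₁, k₂) := Σ_{k=k₁}^{k₂−1} a(k). Then for every ε > 0 there exist natural numbers k₁ and k₂ with k₀ ≤ k₁ and k₁ + 4 ≤ k₂ such that S(k₁, k₂) ≤ ε and S(k₁, k₂) ≤ 2^(4n)·S(k₁+2, k₂−2). -/

import Mathlib

/-- The combinatorial selection argument in the proof of Lemma 3.2 (adapted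
from Cao–Zhu): annuli with small total volume and controlled doubling can be
selected. -/
theorem annulus_selection (n : ℕ) (hn : 1 ≤ n) (κ : ℝ) (hκ : 0 < κ) (k₀ : ℕ)
    (a : ℕ → ℝ) (hann : ∀ k, 0 ≤ a k) (hsum : Summable a)
    (hlow : ∀ K : ℕ, k₀ ≤ K →
      κ * (2 : ℝ) ^ (2 * (K : ℝ) - 1) * (2 : ℝ) ^ (-(n : ℝ) * (K : ℝ)) ≤ a K) :
    ∀ ε > (0 : ℝ), ∃ k₁ k₂ : ℕ, k₀ ≤ k₁ ∧ k₁ + 4 ≤ k₂ ∧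
      (∑ k ∈ Finset.Ico k₁ k₂, a k) ≤ ε ∧
      (∑ k ∈ Finset.Ico k₁ k₂, a k)
        ≤ 2 ^ (4 * n) * ∑ k ∈ Finset.Ico (k₁ + 2) (k₂ - 2), a k := by
  intro ε hε
  set T := ∑' k, a k with hT
  have htail := tendsto_sum_nat_add a
  have hev : ∀ᶠ i in Filter.atTop, (∑' k, a (k + i)) < ε :=
    htail.eventually_lt_const hε
  obtain ⟨N, hN⟩ := Filter.eventually_atTop.mp hev
  obtain ⟨q0, hq0⟩ := pow_unbounded_of_one_lt (T / κ) (by norm_num : (1:ℝ) < 2)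
  set q := q0 + k₀ + N + 1 with hq
  have hq1 : 1 ≤ q := by omega
  have hqk₀ : k₀ ≤ 2 * q := by omega
  have hTq : T < κ * 2 ^ q := by
    have h2 : (2:ℝ) ^ q0 ≤ 2 ^ q := pow_le_pow_right₀ (by norm_num) (by omega)
    have h3 : T / κ < 2 ^ q := hq0.trans_le h2
    calc T = T / κ * κ := by field_simp
      _ < 2 ^ q * κ := mul_lt_mul_of_pos_right h3 hκ
      _ = κ * 2 ^ q := mul_comm _ _
  have key : ∃ j, j < q ∧
      (∑ k ∈ Finset.Ico (2*q+2*j) (6*q+1-2*j), a k)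
        ≤ 2 ^ (4*n) * ∑ k ∈ Finset.Ico (2*q+2*j+2) (6*q+1-2*j-2), a k := by
    by_contra hcon
    push_neg at hcon
    set b : ℕ → ℝ := fun j => ∑ k ∈ Finset.Ico (2*q+2*j) (6*q+1-2*j), a k with hb
    have hbnn : ∀ j, 0 ≤ b j := fun j => Finset.sum_nonneg fun i _ => hann i
    have hstep : ∀ j, j < q → (2:ℝ)^(4*n) * b (j+1) < b j := by
      intro j hj
      have h := hcon j hj
      have he : Finset.Ico (2*q+2*j+2) (6*q+1-2*j-2)
          = Finset.Ico (2*q+2*(j+1)) (6*q+1-2*(j+1)) := by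
        congr 1 <;> omega
      rw [he] at h
      exact h
    have hchain : ∀ j, j ≤ q → ((2:ℝ)^(4*n))^j * b j ≤ b 0 := by
      intro j
      induction j with
      | zero => intro _; simp
      | succ j ih =>
        intro hj
        have hj' : j < q := by omega
        have h1 := hstep j hj'
        have h2 : ((2:ℝ)^(4*n))^(j+1) * b (j+1)
            = ((2:ℝ)^(4*n))^j * ((2:ℝ)^(4*n) * b (j+1)) := by ring
        rw [h2]
        calc ((2:ℝ)^(4*n))^j * ((2:ℝ)^(4*n) * b (j+1))
            ≤ ((2:ℝ)^(4*n))^j * b j :=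
              mul_le_mul_of_nonneg_left h1.le (by positivity)
          _ ≤ b 0 := ih (by omega)
    have hbq : b q = a (4*q) := by
      show (∑ k ∈ Finset.Ico (2*q+2*q) (6*q+1-2*q), a k) = a (4*q)
      rw [show 2*q+2*q = 4*q by ring, show 6*q+1-2*q = 4*q+1 by omega,
        Nat.Ico_succ_singleton, Finset.sum_singleton]
    have hb0T : b 0 ≤ T := Summable.sum_le_tsum _ (fun i _ => hann i) hsum
    have hlow4 : κ * (2:ℝ)^(2*((4*q:ℕ):ℝ)-1) * (2:ℝ)^(-(n:ℝ)*((4*q:ℕ):ℝ)) ≤ a (4*q) :=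
      hlow (4*q) (by omega)
    have hcomb : κ * (2:ℝ)^(8*(q:ℝ)-1) ≤ ((2:ℝ)^(4*n))^q * a (4*q) := by
      have hpos : (0:ℝ) < ((2:ℝ)^(4*n))^q := by positivity
      have h2 : (0:ℝ) < 2 := by norm_num
      have haux : ∀ x y z : ℝ, (2:ℝ)^x * (κ * (2:ℝ)^y * (2:ℝ)^z) = κ * (2:ℝ)^(x+y+z) := by
        intro x y z
        rw [Real.rpow_add h2, Real.rpow_add h2]; ring
      have e : ((2:ℝ)^(4*n))^q * (κ * (2:ℝ)^(2*((4*q:ℕ):ℝ)-1) * (2:ℝ)^(-(n:ℝ)*((4*q:ℕ):ℝ)))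
          = κ * (2:ℝ)^(8*(q:ℝ)-1) := by
        rw [← pow_mul, ← Real.rpow_natCast 2 (4*n*q), haux]
        congr 1
        push_cast
        ring
      calc κ * (2:ℝ)^(8*(q:ℝ)-1)
          = ((2:ℝ)^(4*n))^q * (κ * (2:ℝ)^(2*((4*q:ℕ):ℝ)-1) * (2:ℝ)^(-(n:ℝ)*((4*q:ℕ):ℝ))) :=
            e.symm
        _ ≤ ((2:ℝ)^(4*n))^q * a (4*q) := mul_le_mul_of_nonneg_left hlow4 hpos.le
    have h1 : κ * (2:ℝ)^(8*(q:ℝ)-1) ≤ T := by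
      calc κ * (2:ℝ)^(8*(q:ℝ)-1) ≤ ((2:ℝ)^(4*n))^q * a (4*q) := hcomb
        _ = ((2:ℝ)^(4*n))^q * b q := by rw [hbq]
        _ ≤ b 0 := hchain q le_rfl
        _ ≤ T := hb0T
    have h2 : κ * (2:ℝ)^q ≤ κ * (2:ℝ)^(8*(q:ℝ)-1) := by
      have hq1' : (1:ℝ) ≤ q := by exact_mod_cast hq1
      have hle : ((q:ℝ)) ≤ 8*(q:ℝ) - 1 := by linarith
      calc κ * (2:ℝ)^q = κ * (2:ℝ)^((q:ℝ)) := by rw [Real.rpow_natCast]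
        _ ≤ κ * (2:ℝ)^(8*(q:ℝ)-1) :=
          mul_le_mul_of_nonneg_left
            (Real.rpow_le_rpow_of_exponent_le (by norm_num) hle) hκ.le
    linarith
  obtain ⟨j, hjq, hjS⟩ := key
  refine ⟨2*q+2*j, 6*q+1-2*j, by omega, by omega, ?_, ?_⟩
  · have hsub : Finset.Ico (2*q+2*j) (6*q+1-2*j) ⊆ Finset.Ico (2*q) (6*q+1) :=
      Finset.Ico_subset_Ico (by omega) (by omega)
    have h1 : (∑ k ∈ Finset.Ico (2*q+2*j) (6*q+1-2*j), a k)
        ≤ ∑ k ∈ Finset.Ico (2*q) (6*q+1), a k :=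
      Finset.sum_le_sum_of_subset_of_nonneg hsub (fun i _ _ => hann i)
    have h2 : (∑ k ∈ Finset.Ico (2*q) (6*q+1), a k) ≤ ∑' k, a (k + 2*q) := by
      rw [Finset.sum_Ico_eq_sum_range]
      have hs : Summable (fun k => a (k + 2*q)) := (summable_nat_add_iff (2*q)).mpr hsum
      calc (∑ i ∈ Finset.range (6*q+1-2*q), a (2*q + i))
          = ∑ i ∈ Finset.range (6*q+1-2*q), a (i + 2*q) := by
            refine Finset.sum_congr rfl fun i _ => ?_; rw [add_comm]
        _ ≤ ∑' k, a (k + 2*q) := Summable.sum_le_tsum _ (fun i _ => hann _) hs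
    have h3 := hN (2*q) (by omega)
    linarith
  · exact hjS
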